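/- arXiv:1903.02669 — 3 statements merged into one kernel-verified Lean document; each statement's English description precedes it below -/
import Mathlib

section
/- The Hasse square of the integers is a pullback square of commutative rings: the square with vertices ℤ, ℚ, ∏_p ℤ_p and ℚ ⊗_ℤ ∏_p ℤ_p (where the maps are the canonical ring homomorphisms, with ℚ → ℚ ⊗_ℤ ∏_p ℤ_p given by q ↦ q ⊗ 1 and ∏_p ℤ_p → ℚ ⊗_ℤ ∏_p ℤ_p given by x ↦ 1 ⊗ x) commutes, and whenever q ∈ ℚ and x ∈ ∏_p ℤ_p satisfy q ⊗ 1 = 1 ⊗ x in ℚ ⊗_ℤ ∏_p ℤ_p, there exists a unique integer n with (n : ℚ) = q and (n : ∏_p ℤ_p) = x. -/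
open scoped TensorProduct

instance (p : Nat.Primes) : Fact (p : ℕ).Prime := ⟨p.2⟩

/-- The product over all prime numbers `p` of the rings of `p`-adic integers. -/
abbrev Zhat : Type := Π p : Nat.Primes, ℤ_[(p : ℕ)]

/-- A rational with all `p`-adic norms at most one has denominator one. -/
lemma den_eq_one_of_padicNorms (q : ℚ) (h : ∀ p : Nat.Primes, padicNorm (p : ℕ) q ≤ 1) :
    q.den = 1 := by
  by_contra hden
  obtain ⟨p, hp, hpd⟩ := Nat.exists_prime_and_dvd hden
  haveI : Fact p.Prime := ⟨hp⟩
  have hnum : padicNorm p (q.num : ℚ) = 1 := by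
    rw [padicNorm.int_eq_one_iff]
    intro hdvd
    have h1 : p ∣ q.num.natAbs := by
      have := Int.natAbs_dvd_natAbs.mpr hdvd
      simpa using this
    have := Nat.Coprime.eq_one_of_dvd (Nat.Coprime.coprime_dvd_left h1 q.reduced) hpd
    exact hp.one_lt.ne' this
  have hd : padicNorm p ((q.den : ℚ)) < 1 := (padicNorm.nat_lt_one_iff _).mpr hpd
  have hd0 : (0:ℚ) < padicNorm p ((q.den : ℚ)) := by
    apply lt_of_le_of_ne (padicNorm.nonneg _)
    intro h0
    have := padicNorm.zero_of_padicNorm_eq_zero h0.symm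
    exact_mod_cast q.den_pos.ne' (by exact_mod_cast this)
  have hq : padicNorm p q = padicNorm p (q.num : ℚ) / padicNorm p ((q.den : ℚ)) := by
    rw [← padicNorm.div, Rat.num_div_den]
  have : 1 < padicNorm p q := by
    rw [hq, hnum]
    rw [lt_div_iff₀ hd0, one_mul]
    exact hd
  exact absurd (h ⟨p, hp⟩) (not_le.mpr this)

/-- The Hasse square of the integers is a pullback square of commutative rings:
the square with vertices `ℤ`, `ℚ`, `∏_p ℤ_p` and `ℚ ⊗[ℤ] ∏_p ℤ_p` commutes, and
whenever `q ⊗ 1 = 1 ⊗ x` there is a unique integer `n` mapping to `q` and `x`. -/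
theorem hasse_square_is_pullback :
    (∀ n : ℤ, ((n : ℚ) ⊗ₜ[ℤ] (1 : Zhat) : ℚ ⊗[ℤ] Zhat) = (1 : ℚ) ⊗ₜ[ℤ] ((n : Zhat))) ∧
    ∀ (q : ℚ) (x : Zhat), (q ⊗ₜ[ℤ] (1 : Zhat) : ℚ ⊗[ℤ] Zhat) = (1 : ℚ) ⊗ₜ[ℤ] x →
      ∃! n : ℤ, (n : ℚ) = q ∧ (n : Zhat) = x := by
  constructor
  · intro n
    rw [show ((n:ℚ)) = n • (1:ℚ) by simp, TensorProduct.smul_tmul,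
      show n • (1:Zhat) = ((n:Zhat)) by simp]
  · intro q x hqx
    -- map everything to `Π p, ℚ_[p]`
    set T : Type := Π p : Nat.Primes, ℚ_[(p : ℕ)] with hT
    let f : ℚ →ₐ[ℤ] T := (Pi.ringHom (fun p : Nat.Primes => (Rat.castHom ℚ_[(p:ℕ)]))).toIntAlgHom
    let g : Zhat →ₐ[ℤ] T :=
      (Pi.ringHom (fun p : Nat.Primes =>
        (PadicInt.Coe.ringHom).comp (Pi.evalRingHom _ p))).toIntAlgHom
    let F := Algebra.TensorProduct.productMap f g
    have hF := congrArg F hqx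
    rw [Algebra.TensorProduct.productMap_apply_tmul, Algebra.TensorProduct.productMap_apply_tmul,
      map_one, map_one, mul_one, one_mul] at hF
    -- componentwise : (q : ℚ_[p]) = x p
    have hcomp : ∀ p : Nat.Primes, ((q : ℚ_[(p:ℕ)])) = (x p : ℚ_[(p:ℕ)]) :=
      fun p => congrFun hF p
    have hnorm : ∀ p : Nat.Primes, padicNorm (p : ℕ) q ≤ 1 := by
      intro p
      have := (x p).property
      rw [← hcomp p, Padic.eq_padicNorm] at this
      exact_mod_cast this
    have hden := den_eq_one_of_padicNorms q hnorm
    refine ⟨q.num, ⟨?_, ?_⟩, ?_⟩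
    · exact_mod_cast (Rat.den_eq_one_iff q).mp hden
    · funext p
      have hq : ((q.num : ℚ) : ℚ_[(p:ℕ)]) = (x p : ℚ_[(p:ℕ)]) := by
        rw [← hcomp p]
        congr 1
        exact_mod_cast (Rat.den_eq_one_iff q).mp hden
      apply Subtype.ext
      rw [← hq]
      push_cast
      rfl
    · rintro n ⟨hn, -⟩
      have : (n : ℚ) = (q.num : ℚ) := by
        rw [hn]
        exact_mod_cast ((Rat.den_eq_one_iff q).mp hden).symm
      exact_mod_cast this
end

section
/- Every element of ℚ ⊗_ℤ ∏_p ℤ_p can be written in the form q ⊗ 1 + 1 ⊗ x for some q ∈ ℚ and x ∈ ∏_p ℤ_p; equivalently, the additive map ℚ × ∏_p ℤ_p → ℚ ⊗_ℤ ∏_p ℤ_p sending (q, x) to q ⊗ 1 + 1 ⊗ x is surjective. -/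
open scoped TensorProduct

lemma key (p : Nat.Primes) (y : Zhat) :
    ∃ c : ℤ, ∃ z : Zhat, y = (c : Zhat) + ((p : ℕ) : ℤ) • z := by
  set c : ℤ := ((y p).appr 1 : ℤ) with hc
  have h : ∀ q : Nat.Primes, ∃ w : ℤ_[(q:ℕ)], y q - (c : ℤ_[(q:ℕ)]) = ((p:ℕ) : ℤ_[(q:ℕ)]) * w := by
    intro q
    by_cases hq : q = p
    · subst hq
      have hs := PadicInt.appr_spec 1 (y q)
      rw [Ideal.mem_span_singleton] at hs
      obtain ⟨w, hw⟩ := hs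
      refine ⟨w, ?_⟩
      rw [hc]
      push_cast
      rw [pow_one] at hw
      rw [← hw]
    · have hu : IsUnit (((p:ℕ) : ℤ) : ℤ_[(q:ℕ)]) := by
        rw [PadicInt.isUnit_iff]
        have h1 : ‖(((p:ℕ) : ℤ) : ℤ_[(q:ℕ)])‖ ≤ 1 := (((p:ℕ):ℤ) : ℤ_[(q:ℕ)]).2
        have h2 : ¬ ‖(((p:ℕ) : ℤ) : ℤ_[(q:ℕ)])‖ < 1 := by
          rw [PadicInt.norm_int_lt_one_iff_dvd]
          intro hd
          have hd' : (q:ℕ) ∣ (p:ℕ) := by exact_mod_cast hd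
          exact hq (Subtype.ext ((Nat.prime_dvd_prime_iff_eq q.2 p.2).mp hd'))
        linarith
      obtain ⟨u, hu⟩ := hu
      refine ⟨u⁻¹ * (y q - c), ?_⟩
      have : (((p:ℕ) : ℤ) : ℤ_[(q:ℕ)]) = (u : ℤ_[(q:ℕ)]) := hu.symm
      push_cast at this ⊢
      rw [this]
      rw [← mul_assoc, Units.mul_inv, one_mul]
  choose z hz using h
  refine ⟨c, z, funext fun q => ?_⟩
  have := hz q
  simp only [Pi.add_apply, Pi.smul_apply]
  push_cast at this ⊢
  rw [zsmul_eq_mul]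
  push_cast
  linear_combination this

lemma aux : ∀ n : ℕ, 0 < n → ∀ y : Zhat, ∃ q : ℚ, ∃ x : Zhat,
    ((1/(n:ℚ)) ⊗ₜ[ℤ] y : ℚ ⊗[ℤ] Zhat) = q ⊗ₜ[ℤ] (1 : Zhat) + (1 : ℚ) ⊗ₜ[ℤ] x := by
  intro n
  induction n using Nat.strong_induction_on with
  | _ n ih =>
    intro hn y
    rcases eq_or_lt_of_le (show 1 ≤ n from hn) with h1 | h1
    · refine ⟨0, y, ?_⟩
      rw [← h1]
      norm_num [TensorProduct.zero_tmul]
    · -- n ≥ 2, pick a prime factor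
      obtain ⟨p, hp, hdvd⟩ := Nat.exists_prime_and_dvd (by omega : n ≠ 1)
      obtain ⟨m, hm⟩ := hdvd
      have hm0 : 0 < m := by
        rcases Nat.eq_zero_or_pos m with h | h
        · subst h; simp at hm; omega
        · exact h
      have hmn : m < n := by
        have := hp.two_le
        nlinarith [hm]
      obtain ⟨c, z, hz⟩ := key ⟨p, hp⟩ y
      obtain ⟨q', x', hqx⟩ := ih m hmn hm0 z
      refine ⟨(c : ℚ) / n + q', x', ?_⟩
      have step1 : ((1/(n:ℚ)) ⊗ₜ[ℤ] y : ℚ ⊗[ℤ] Zhat)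
          = ((c:ℚ)/n) ⊗ₜ[ℤ] (1 : Zhat) + (1/(m:ℚ)) ⊗ₜ[ℤ] z := by
        rw [hz, TensorProduct.tmul_add]
        congr 1
        · have : ((c : ℤ) : Zhat) = (c : ℤ) • (1 : Zhat) := by
            simp [zsmul_eq_mul]
          rw [this, TensorProduct.tmul_smul, TensorProduct.smul_tmul']
          congr 1
          simp [zsmul_eq_mul]
          ring
        · rw [TensorProduct.tmul_smul, TensorProduct.smul_tmul']
          congr 1
          rw [zsmul_eq_mul]
          push_cast
          rw [hm]
          push_cast
          have hp0 : (p:ℚ) ≠ 0 := by exact_mod_cast hp.pos.ne'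
          have hm0' : (m:ℚ) ≠ 0 := by exact_mod_cast hm0.ne'
          field_simp
      rw [step1, hqx, TensorProduct.add_tmul]
      abel

/-- Every element of `ℚ ⊗[ℤ] ∏_p ℤ_p` is of the form `q ⊗ 1 + 1 ⊗ x`:
the map `ℚ × ∏_p ℤ_p → ℚ ⊗[ℤ] ∏_p ℤ_p`, `(q, x) ↦ q ⊗ 1 + 1 ⊗ x`, is surjective. -/
theorem hasse_sum_surjective :
    Function.Surjective (fun qx : ℚ × Zhat =>
      (qx.1 ⊗ₜ[ℤ] (1 : Zhat) + (1 : ℚ) ⊗ₜ[ℤ] qx.2 : ℚ ⊗[ℤ] Zhat)) := by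
  intro t
  induction t with
  | zero =>
    exact ⟨(0, 0), by simp [TensorProduct.zero_tmul, TensorProduct.tmul_zero]⟩
  | tmul q x =>
    have hq : q = (q.num : ℚ) * (1 / (q.den : ℚ)) := by
      rw [mul_one_div, Rat.num_div_den]
    obtain ⟨q', x', h⟩ := aux q.den q.pos x  -- fix name
    refine ⟨(q.num • q', q.num • x'), ?_⟩
    simp only
    have : (q ⊗ₜ[ℤ] x : ℚ ⊗[ℤ] Zhat) = q.num • ((1 / (q.den : ℚ)) ⊗ₜ[ℤ] x) := by
      rw [TensorProduct.smul_tmul']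
      congr 1
    rw [this, h, smul_add, TensorProduct.smul_tmul', TensorProduct.tmul_smul]
  | add a b iha ihb =>
    obtain ⟨⟨q1, x1⟩, h1⟩ := iha
    obtain ⟨⟨q2, x2⟩, h2⟩ := ihb
    refine ⟨(q1 + q2, x1 + x2), ?_⟩
    simp only at h1 h2 ⊢
    rw [TensorProduct.add_tmul, TensorProduct.tmul_add, ← h1, ← h2]
    abel
end

section
/- The Hasse square of the integers is a homotopy pullback, i.e. the associated total sequence of abelian groups is short exact: the sequence 0 → ℤ → ℚ × ∏_p ℤ_p → ℚ ⊗_ℤ ∏_p ℤ_p → 0 is exact, where the first map is the diagonal n ↦ ((n : ℚ), (n : ∏_p ℤ_p)) and the second map sends (q, x) to q ⊗ 1 − 1 ⊗ x. That is: the diagonal map is injective, the second map is surjective, and the kernel of the second map equals the image of the diagonal. -/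
open scoped TensorProduct

noncomputable def phi (p : Nat.Primes) : ℚ ⊗[ℤ] Zhat →ₗ[ℤ] ℚ_[(p : ℕ)] :=
  TensorProduct.lift <| LinearMap.mk₂ ℤ (fun q z => q • ((z p : ℚ_[(p : ℕ)])))
    (fun q₁ q₂ z => by simp [add_smul])
    (fun n q z => by
      simp only [zsmul_eq_mul]
      rw [Rat.smul_def, Rat.smul_def]
      push_cast
      ring)
    (fun q z₁ z₂ => by push_cast [Pi.add_apply]; simp [smul_add])
    (fun n q z => by
      simp only [Pi.smul_apply, zsmul_eq_mul]
      push_cast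
      rw [Rat.smul_def, Rat.smul_def]
      ring)

theorem phi_tmul (p : Nat.Primes) (q : ℚ) (z : Zhat) :
    phi p (q ⊗ₜ[ℤ] z) = q • ((z p : ℚ_[(p : ℕ)])) := rfl

lemma rat_int_of_norms (q : ℚ) (h : ∀ p : ℕ, p.Prime → padicNorm p q ≤ 1) :
    ∃ n : ℤ, (n : ℚ) = q := by
  have hden : q.den = 1 := by
    rw [Nat.eq_one_iff_not_exists_prime_dvd]
    intro p hp hdvd
    have : Fact p.Prime := ⟨hp⟩
    have hq0 : q ≠ 0 := by
      intro h0
      rw [h0] at hdvd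
      simp at hdvd
      exact hp.ne_one hdvd
    have hnum : ¬ (p : ℤ) ∣ q.num := by
      intro hd
      have h1 : p ∣ q.num.natAbs := by
        have := Int.natAbs_dvd_natAbs.mpr hd
        simpa using this
      have hgcd : p ∣ 1 := q.reduced ▸ Nat.dvd_gcd h1 hdvd
      exact hp.ne_one (Nat.dvd_one.mp hgcd)
    have hval : padicValRat p q < 0 := by
      rw [padicValRat]
      have h1 : padicValInt p q.num = 0 := padicValInt.eq_zero_of_not_dvd hnum
      have h2 : 1 ≤ padicValNat p q.den :=
        one_le_padicValNat_of_dvd q.den_pos.ne' hdvd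
      omega
    have := h p hp
    rw [padicNorm.eq_zpow_of_nonzero hq0] at this
    have hlt : (1 : ℚ) < (p : ℚ) ^ (-padicValRat p q) := by
      apply one_lt_zpow₀ (by exact_mod_cast hp.one_lt)
      omega
    linarith
  exact ⟨q.num, by rw [← Rat.num_div_den q, hden]; simp⟩

lemma int_crt {a b : ℕ} (hab : Nat.Coprime a b) (b₁ b₂ : ℤ) :
    ∃ c : ℤ, (a : ℤ) ∣ c - b₁ ∧ (b : ℤ) ∣ c - b₂ := by
  obtain ⟨u, v, huv⟩ := Nat.isCoprime_iff_coprime.mpr hab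
  refine ⟨b₂ * (u * a) + b₁ * (v * b), ⟨(b₂ - b₁) * u, ?_⟩, ⟨(b₁ - b₂) * v, ?_⟩⟩
  · linear_combination b₁ * huv
  · linear_combination b₂ * huv

lemma prime_pow_div (P : Nat.Primes) (k : ℕ) (x : Zhat) :
    ∃ b : ℤ, (((P : ℕ) ^ k : ℕ) : Zhat) ∣ x - (b : Zhat) := by
  refine ⟨((x P).appr k : ℤ), ?_⟩
  have h : ∀ q : Nat.Primes, (((P : ℕ) ^ k : ℕ) : ℤ_[(q : ℕ)]) ∣
      (x q - ((((x P).appr k : ℤ)) : ℤ_[(q : ℕ)])) := by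
    intro q
    by_cases hq : q = P
    · subst hq
      have h2 := PadicInt.appr_spec k (x q)
      rw [Ideal.mem_span_singleton] at h2
      have h3 : ((((q : ℕ) ^ k : ℕ)) : ℤ_[(q : ℕ)]) = ((q : ℕ) : ℤ_[(q : ℕ)]) ^ k := by
        push_cast; ring
      rw [h3]
      convert h2 using 2
      simp
    · have hne : (q : ℕ) ≠ (P : ℕ) := fun h => hq (Subtype.ext h)
      have hunit : IsUnit (((P : ℕ) : ℤ_[(q : ℕ)])) := by
        rw [PadicInt.isUnit_iff]
        have hle := PadicInt.norm_le_one (((P : ℕ) : ℤ_[(q : ℕ)]))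
        have hnlt : ¬ ‖(((P : ℕ) : ℤ) : ℤ_[(q : ℕ)])‖ < 1 := by
          rw [PadicInt.norm_int_lt_one_iff_dvd]
          intro hdvd
          have : (q : ℕ) ∣ (P : ℕ) := Int.ofNat_dvd.mp (by exact_mod_cast hdvd)
          rcases (Nat.Prime.eq_one_or_self_of_dvd P.2 _ this) with h1 | h1
          · exact q.2.ne_one h1
          · exact hne h1
        push_cast at hnlt
        have := lt_of_le_of_ne hle
        rcases eq_or_lt_of_le hle with h1 | h1
        · exact h1
        · exact absurd h1 hnlt
      have h3 : ((((P : ℕ) ^ k : ℕ)) : ℤ_[(q : ℕ)]) = ((P : ℕ) : ℤ_[(q : ℕ)]) ^ k := by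
        push_cast; ring
      rw [h3]
      exact (hunit.pow k).dvd
  choose y hy using h
  exact ⟨y, funext fun q => by
    simpa [Pi.natCast_apply, Pi.intCast_apply, Pi.sub_apply, Pi.mul_apply] using hy q⟩

lemma key_div (n : ℕ) : 0 < n → ∀ x : Zhat, ∃ b : ℤ, ((n : ℕ) : Zhat) ∣ x - (b : Zhat) := by
  induction n using Nat.recOnPosPrimePosCoprime with
  | prime_pow p k hp hk =>
    intro _ x
    exact prime_pow_div ⟨p, hp⟩ k x
  | zero => intro h; exact absurd h (lt_irrefl 0)
  | one => intro _ x; exact ⟨0, by simp⟩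
  | coprime a b ha hb hab iha ihb =>
    intro _ x
    obtain ⟨b₁, hb₁⟩ := iha (by omega) x
    obtain ⟨b₂, hb₂⟩ := ihb (by omega) x
    obtain ⟨c, hc₁, hc₂⟩ := int_crt hab b₁ b₂
    have cast_dvd : ∀ (m : ℕ) (u v : ℤ), (m : ℤ) ∣ u - v →
        ((m : ℕ) : Zhat) ∣ ((u : ℤ) : Zhat) - ((v : ℤ) : Zhat) := by
      intro m u v ⟨w, hw⟩
      refine ⟨((w : ℤ) : Zhat), ?_⟩
      have : ((u - v : ℤ) : Zhat) = (((m : ℤ) * w : ℤ) : Zhat) := by exact_mod_cast congrArg _ hw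
      push_cast at this ⊢
      exact this
    have hca : ((a : ℕ) : Zhat) ∣ x - (c : Zhat) := by
      have he : x - (c : Zhat) = (x - (b₁ : Zhat)) + (((b₁ : ℤ) : Zhat) - ((c : ℤ) : Zhat)) := by
        ring
      rw [he]
      exact dvd_add hb₁ (cast_dvd a b₁ c (by simpa using (dvd_neg.mpr hc₁)))
    have hcb : ((b : ℕ) : Zhat) ∣ x - (c : Zhat) := by
      have he : x - (c : Zhat) = (x - (b₂ : Zhat)) + (((b₂ : ℤ) : Zhat) - ((c : ℤ) : Zhat)) := by
        ring
      rw [he]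
      exact dvd_add hb₂ (cast_dvd b b₂ c (by simpa using (dvd_neg.mpr hc₂)))
    have hcop : IsCoprime ((a : ℕ) : Zhat) ((b : ℕ) : Zhat) := by
      have h1 : IsCoprime ((a : ℤ)) ((b : ℤ)) := Nat.isCoprime_iff_coprime.mpr hab
      have h2 := h1.map (Int.castRingHom Zhat)
      simpa using h2
    refine ⟨c, ?_⟩
    have := hcop.mul_dvd hca hcb
    push_cast
    push_cast at this
    exact this

/-- The Hasse square of the integers is a homotopy pullback:
the sequence `0 → ℤ → ℚ × ∏_p ℤ_p → ℚ ⊗[ℤ] ∏_p ℤ_p → 0` is exact, where the first map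
is the diagonal `n ↦ ((n : ℚ), (n : ∏_p ℤ_p))` and the second sends `(q, x)` to
`q ⊗ 1 - 1 ⊗ x`. -/
theorem hasse_square_short_exact :
    Function.Injective (fun n : ℤ => (((n : ℚ), (n : Zhat)) : ℚ × Zhat)) ∧
    Function.Surjective (fun qx : ℚ × Zhat =>
      (qx.1 ⊗ₜ[ℤ] (1 : Zhat) - (1 : ℚ) ⊗ₜ[ℤ] qx.2 : ℚ ⊗[ℤ] Zhat)) ∧
    ∀ qx : ℚ × Zhat,
      (qx.1 ⊗ₜ[ℤ] (1 : Zhat) - (1 : ℚ) ⊗ₜ[ℤ] qx.2 : ℚ ⊗[ℤ] Zhat) = 0 ↔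
        ∃ n : ℤ, (((n : ℚ), (n : Zhat)) : ℚ × Zhat) = qx := by
  refine ⟨?_, ?_, ?_⟩
  · intro m n h
    have : (m : ℚ) = (n : ℚ) := congrArg Prod.fst h
    exact_mod_cast this
  · intro t
    induction t using TensorProduct.induction_on with
    | zero => exact ⟨(0, 0), by simp⟩
    | tmul q z =>
      obtain ⟨b, y, hy⟩ := key_div q.den q.den_pos (q.num • z)
      refine ⟨((b : ℚ) / (q.den : ℚ), -y), ?_⟩
      show ((b : ℚ) / (q.den : ℚ)) ⊗ₜ[ℤ] (1 : Zhat) - (1 : ℚ) ⊗ₜ[ℤ] (-y) = q ⊗ₜ[ℤ] z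
      rw [TensorProduct.tmul_neg, sub_neg_eq_add]
      have hden : ((q.den : ℚ)) ≠ 0 := by exact_mod_cast q.den_pos.ne'
      have e2 : q.num • z = ((b : ℤ) : Zhat) + ((q.den : ℕ) : Zhat) * y := by
        rw [← hy]; ring
      have hq : (q.num • ((1 : ℚ) / (q.den : ℚ))) = q := by
        rw [zsmul_eq_mul, mul_one_div]; exact Rat.num_div_den q
      calc ((b : ℚ) / (q.den : ℚ)) ⊗ₜ[ℤ] (1 : Zhat) + (1 : ℚ) ⊗ₜ[ℤ] y
          = (b • ((1 : ℚ) / (q.den : ℚ))) ⊗ₜ[ℤ] (1 : Zhat)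
            + ((q.den : ℤ) • ((1 : ℚ) / (q.den : ℚ))) ⊗ₜ[ℤ] y := by
            congr 2
            · rw [zsmul_eq_mul, mul_one_div]
            · rw [zsmul_eq_mul, mul_one_div]
              push_cast
              rw [div_self hden]
        _ = ((1 : ℚ) / (q.den : ℚ)) ⊗ₜ[ℤ] ((b : ℤ) • (1 : Zhat))
            + ((1 : ℚ) / (q.den : ℚ)) ⊗ₜ[ℤ] ((q.den : ℤ) • y) := by
            rw [TensorProduct.smul_tmul, TensorProduct.smul_tmul]
        _ = ((1 : ℚ) / (q.den : ℚ)) ⊗ₜ[ℤ] (q.num • z) := by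
            rw [← TensorProduct.tmul_add]
            congr 1
            rw [e2]
            congr 1
            · simp
        _ = (q.num • ((1 : ℚ) / (q.den : ℚ))) ⊗ₜ[ℤ] z := (TensorProduct.smul_tmul _ _ _).symm
        _ = q ⊗ₜ[ℤ] z := by rw [hq]
    | add t₁ t₂ ih₁ ih₂ =>
      obtain ⟨⟨q₁, x₁⟩, e₁⟩ := ih₁
      obtain ⟨⟨q₂, x₂⟩, e₂⟩ := ih₂
      refine ⟨(q₁ + q₂, x₁ + x₂), ?_⟩
      dsimp only at e₁ e₂ ⊢
      rw [← e₁, ← e₂, TensorProduct.add_tmul, TensorProduct.tmul_add]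
      abel
  · rintro ⟨q, x⟩
    constructor
    · intro h
      have hp : ∀ p : Nat.Primes, ((q : ℚ_[(p : ℕ)])) = ((x p : ℚ_[(p : ℕ)])) := by
        intro p
        have := congrArg (phi p) h
        rw [map_sub, LinearMap.map_zero, phi_tmul, phi_tmul] at this
        rw [Rat.smul_def, Rat.smul_def] at this
        simp only [Pi.one_apply, PadicInt.coe_one, mul_one, Rat.cast_one, one_mul] at this
        exact sub_eq_zero.mp this
      have hnorm : ∀ p : ℕ, p.Prime → padicNorm p q ≤ 1 := by
        intro p hprime
        have : Fact p.Prime := ⟨hprime⟩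
        have h1 := hp ⟨p, hprime⟩
        have h2 : ‖(q : ℚ_[p])‖ ≤ 1 := by
          rw [h1]; exact (x ⟨p, hprime⟩).2
        rw [Padic.eq_padicNorm] at h2
        exact_mod_cast h2
      obtain ⟨n, hn⟩ := rat_int_of_norms q hnorm
      refine ⟨n, Prod.ext_iff.mpr ⟨hn, ?_⟩⟩
      show (n : Zhat) = x
      funext p
      apply Subtype.coe_injective
      rw [Pi.intCast_apply]
      show ((n : ℤ_[(p : ℕ)]) : ℚ_[(p : ℕ)]) = ((x p : ℚ_[(p : ℕ)]))
      rw [← hp p, ← hn]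
      push_cast
      rfl
    · rintro ⟨n, h⟩
      have h1 : (n : ℚ) = q := congrArg Prod.fst h
      have h2 : (n : Zhat) = x := congrArg Prod.snd h
      subst h1
      subst h2
      show (n : ℚ) ⊗ₜ[ℤ] (1 : Zhat) - (1 : ℚ) ⊗ₜ[ℤ] ((n : ℤ) : Zhat) = 0
      have e1 : ((n : ℤ) : Zhat) = n • (1 : Zhat) := by simp
      have e2 : ((n : ℚ)) = n • (1 : ℚ) := by simp
      rw [e1, e2, ← TensorProduct.smul_tmul, sub_self]
end
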